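/- Let N be a normal subgroup of a finite group G such that G/N is abelian, and let π be an irreducible finite-dimensional complex representation of G. Then every irreducible representation of N that appears in the restriction Res_N π does so with the same multiplicity; that is, for any two irreducible finite-dimensional complex representations ρ and ρ' of N with Hom_N(ρ, Res_N π) ≠ 0 and Hom_N(ρ', Res_N π) ≠ 0, one has dim Hom_N(ρ, Res_N π) = dim Hom_N(ρ', Res_N π). -/

import Mathlib

noncomputable section

namespace RestrictionMult

variable {G : Type*} [Group G]

/-- The submodule of equivariant linear maps between two representations. -/
def equivariantHoms {V W : Type*} [AddCommGroup V] [Module ℂ V]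
    [AddCommGroup W] [Module ℂ W]
    (π : Representation ℂ G V) (σ : Representation ℂ G W) :
    Submodule ℂ (V →ₗ[ℂ] W) where
  carrier := {f | ∀ g v, f (π g v) = σ g (f v)}
  add_mem' := by intro f₁ f₂ h₁ h₂ g v; simp [h₁ g v, h₂ g v]
  zero_mem' := by intro g v; simp
  smul_mem' := by intro c f hf g v; simp [hf g v]

/-- Two representations are equivalent (isomorphic). -/
def IsRepEquiv {V W : Type*} [AddCommGroup V] [Module ℂ V]
    [AddCommGroup W] [Module ℂ W]
    (π : Representation ℂ G V) (σ : Representation ℂ G W) : Prop :=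
  ∃ e : V ≃ₗ[ℂ] W, ∀ g v, e (π g v) = σ g (e v)

/-- A representation is irreducible if the space is nonzero and the only invariant
submodules are `⊥` and `⊤`. -/
def IsIrreducibleRep {V : Type*} [AddCommGroup V] [Module ℂ V]
    (π : Representation ℂ G V) : Prop :=
  (∃ v : V, v ≠ 0) ∧
    ∀ U : Submodule ℂ V, (∀ g, ∀ v ∈ U, π g v ∈ U) → U = ⊥ ∨ U = ⊤

/-- The twist of a representation by a character `χ : G →* ℂˣ`. -/
def twist {V : Type*} [AddCommGroup V] [Module ℂ V]
    (π : Representation ℂ G V) (χ : G →* ℂˣ) : Representation ℂ G V where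
  toFun g := (χ g : ℂ) • π g
  map_one' := by simp
  map_mul' g h := by
    ext v
    simp only [Module.End.mul_apply, LinearMap.smul_apply, map_smul, map_mul, Units.val_mul,
      mul_smul]
    rw [smul_comm]

/-- The direct sum of two representations. -/
def dsum {V W : Type*} [AddCommGroup V] [Module ℂ V]
    [AddCommGroup W] [Module ℂ W]
    (π : Representation ℂ G V) (σ : Representation ℂ G W) :
    Representation ℂ G (V × W) where
  toFun g := (π g).prodMap (σ g)
  map_one' := by ext v <;> simp
  map_mul' g h := by ext v <;> simp [Module.End.mul_apply]

/-- The subrepresentation on an invariant submodule. -/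
def resSub {V : Type*} [AddCommGroup V] [Module ℂ V]
    (π : Representation ℂ G V) (U : Submodule ℂ V)
    (hU : ∀ g, ∀ v ∈ U, π g v ∈ U) : Representation ℂ G U where
  toFun g := (π g).restrict (fun v hv => hU g v hv)
  map_one' := by ext v; simp [LinearMap.restrict_apply]
  map_mul' g h := by ext v; simp [LinearMap.restrict_apply, Module.End.mul_apply]

/-- The conjugate `π^g` of a representation of a normal subgroup `N`,
given by `x ↦ π (g⁻¹ x g)`. -/
def conjRep {N : Subgroup G} [N.Normal] {V : Type*} [AddCommGroup V] [Module ℂ V]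
    (π : Representation ℂ N V) (g : G) : Representation ℂ N V :=
  π.comp (MulAut.conjNormal g⁻¹ : N ≃* N).toMonoidHom

/-- The space of the representation of `G` induced from a representation of a
subgroup `N`: functions `f : G → V` with `f (n * x) = π n (f x)`. -/
def indSubmodule (N : Subgroup G) {V : Type*} [AddCommGroup V] [Module ℂ V]
    (π : Representation ℂ N V) : Submodule ℂ (G → V) where
  carrier := {f | ∀ (n : N) (x : G), f (n * x) = π n (f x)}
  add_mem' := by intro f₁ f₂ h₁ h₂ n x; simp [h₁ n x, h₂ n x]
  zero_mem' := by intro n x; simp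
  smul_mem' := by intro c f hf n x; simp [hf n x]

/-- The representation of `G` induced from a representation `π` of a subgroup `N`,
acting by right translation on `indSubmodule N π`. -/
def ind (N : Subgroup G) {V : Type*} [AddCommGroup V] [Module ℂ V]
    (π : Representation ℂ N V) : Representation ℂ G (indSubmodule N π) where
  toFun g :=
    { toFun := fun f => ⟨fun x => (f : G → V) (x * g),
        fun n x => by simpa [mul_assoc] using f.2 n (x * g)⟩
      map_add' := fun f₁ f₂ => by ext x; rfl
      map_smul' := fun c f => by ext x; rfl }
  map_one' := by ext f x; simp
  map_mul' g h := by ext f x; simp [Module.End.mul_apply, mul_assoc]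



lemma mem_equivariantHoms {V W : Type*} [AddCommGroup V] [Module ℂ V]
    [AddCommGroup W] [Module ℂ W]
    {π : Representation ℂ G V} {σ : Representation ℂ G W} {f : V →ₗ[ℂ] W} :
    f ∈ equivariantHoms π σ ↔ ∀ g v, f (π g v) = σ g (f v) := Iff.rfl


lemma conjRep_apply_mk {N : Subgroup G} [N.Normal] {V : Type*} [AddCommGroup V]
    [Module ℂ V] (ρ : Representation ℂ N V) (g : G) (n : N)
    (hmem : g⁻¹ * (n : G) * g ∈ N) :
    conjRep ρ g n = ρ ⟨g⁻¹ * (n : G) * g, hmem⟩ := by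
  show ρ _ = ρ _
  congr 1
  apply Subtype.ext
  show g⁻¹ * (n : G) * g⁻¹⁻¹ = g⁻¹ * (n : G) * g
  rw [inv_inv]

lemma conjRep_apply_mk' {N : Subgroup G} [N.Normal] {V : Type*} [AddCommGroup V]
    [Module ℂ V] (ρ : Representation ℂ N V) (g : G) (m : N)
    (hmem : g * (m : G) * g⁻¹ ∈ N) :
    conjRep ρ g ⟨g * (m : G) * g⁻¹, hmem⟩ = ρ m := by
  show ρ _ = ρ _
  congr 1
  apply Subtype.ext
  show g⁻¹ * (g * (m : G) * g⁻¹) * g⁻¹⁻¹ = (m : G)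
  group

/-- Transporting the hom space along a linear equivalence preserves finrank. -/
lemma finrank_equivariantHoms_eq {V V₂ W W₂ : Type*}
    [AddCommGroup V] [Module ℂ V] [AddCommGroup V₂] [Module ℂ V₂]
    [AddCommGroup W] [Module ℂ W] [AddCommGroup W₂] [Module ℂ W₂]
    (π₁ : Representation ℂ G W) (π₂ : Representation ℂ G W₂)
    (σ₁ : Representation ℂ G V) (σ₂ : Representation ℂ G V₂)
    (E : (W →ₗ[ℂ] V) ≃ₗ[ℂ] (W₂ →ₗ[ℂ] V₂))
    (h1 : ∀ f ∈ equivariantHoms π₁ σ₁, E f ∈ equivariantHoms π₂ σ₂)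
    (h2 : ∀ f ∈ equivariantHoms π₂ σ₂, E.symm f ∈ equivariantHoms π₁ σ₁) :
    Module.finrank ℂ (equivariantHoms π₁ σ₁) =
      Module.finrank ℂ (equivariantHoms π₂ σ₂) := by
  have hmap : (equivariantHoms π₁ σ₁).map (E : (W →ₗ[ℂ] V) →ₗ[ℂ] (W₂ →ₗ[ℂ] V₂)) =
      equivariantHoms π₂ σ₂ := by
    apply le_antisymm
    · rintro _ ⟨f, hf, rfl⟩
      exact h1 f hf
    · intro f hf
      exact ⟨E.symm f, h2 f hf, E.apply_symm_apply f⟩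
  rw [← hmap, LinearEquiv.finrank_map_eq]

/-- If `N` is a normal subgroup of a finite group `G` with abelian
quotient and `π` is an irreducible complex representation of `G`, then every irreducible
representation of `N` occurring in `Res_N π` does so with the same multiplicity. -/
theorem multiplicity_in_restriction_constant
    {G : Type*} [Group G] [Finite G] (N : Subgroup G) [N.Normal]
    (hab : ∀ a b : G ⧸ N, a * b = b * a)
    {V W W' : Type*}
    [AddCommGroup V] [Module ℂ V] [FiniteDimensional ℂ V]
    [AddCommGroup W] [Module ℂ W] [FiniteDimensional ℂ W]
    [AddCommGroup W'] [Module ℂ W'] [FiniteDimensional ℂ W']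
    (π : Representation ℂ G V) (hπ : IsIrreducibleRep π)
    (ρ : Representation ℂ N W) (hρ : IsIrreducibleRep ρ)
    (ρ' : Representation ℂ N W') (hρ' : IsIrreducibleRep ρ')
    (h₁ : equivariantHoms ρ (π.comp N.subtype) ≠ ⊥)
    (h₂ : equivariantHoms ρ' (π.comp N.subtype) ≠ ⊥) :
    Module.finrank ℂ (equivariantHoms ρ (π.comp N.subtype)) =
      Module.finrank ℂ (equivariantHoms ρ' (π.comp N.subtype)) := by
  classical
  haveI : Fintype N := Fintype.ofFinite N
  set τ : Representation ℂ N V := π.comp N.subtype with hτ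
  obtain ⟨f, hf, hf0⟩ := (Submodule.ne_bot_iff _).mp h₁
  obtain ⟨f', hf', hf'0⟩ := (Submodule.ne_bot_iff _).mp h₂
  rw [mem_equivariantHoms] at hf hf'
  have hfπ : ∀ (n : N) (w : W), f (ρ n w) = π (n : G) (f w) := hf
  have hf'π : ∀ (n : N) (w : W'), f' (ρ' n w) = π (n : G) (f' w) := hf'
  -- f' is injective
  have hker : LinearMap.ker f' = ⊥ := by
    rcases hρ'.2 (LinearMap.ker f') (fun n w hw => by
      simp only [LinearMap.mem_ker] at hw ⊢
      rw [hf' n w, hw, map_zero]) with h | h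
    · exact h
    · exact absurd (LinearMap.ker_eq_top.mp h) hf'0
  obtain ⟨q0, hq0⟩ := f'.exists_leftInverse_of_injective hker
  have hq0' : ∀ w : W', q0 (f' w) = w := fun w =>
    congrFun (congrArg (fun h => h.toFun) hq0) w
  -- averaged projection p : V → W'
  set c : ℂ := (Fintype.card N : ℂ)⁻¹ with hc
  set p : V →ₗ[ℂ] W' :=
    c • ∑ n : N, (ρ' n⁻¹) ∘ₗ q0 ∘ₗ (π (n : G)) with hp
  have hcard : (Fintype.card N : ℂ) ≠ 0 := by
    exact_mod_cast Fintype.card_ne_zero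
  have hpf' : ∀ w : W', p (f' w) = w := by
    intro w
    have : ∀ n : N, (ρ' n⁻¹) (q0 (π (n : G) (f' w))) = w := by
      intro n
      rw [← hf'π n w, hq0' (ρ' n w)]
      have : (ρ' n⁻¹ * ρ' n) w = w := by rw [← map_mul]; simp
      simpa using this
    simp only [hp, LinearMap.smul_apply, LinearMap.sum_apply, LinearMap.comp_apply]
    rw [Finset.sum_congr rfl (fun n _ => this n)]
    rw [Finset.sum_const, Finset.card_univ, hc, ← Nat.cast_smul_eq_nsmul ℂ,
      smul_smul, inv_mul_cancel₀ hcard, one_smul]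
  have hpequi : ∀ (m : N) (v : V), p (π (m : G) v) = ρ' m (p v) := by
    intro m v
    simp only [hp, LinearMap.smul_apply, LinearMap.sum_apply, LinearMap.comp_apply]
    rw [map_smul]
    congr 1
    have key : ∀ n : N, (ρ' n⁻¹) (q0 (π (n : G) (π (m : G) v)))
        = (ρ' m) ((ρ' (n * m)⁻¹) (q0 (π ((n * m : N) : G) v))) := by
      intro n
      have h1 : π (n : G) (π (m : G) v) = π ((n * m : N) : G) v := by
        rw [← Module.End.mul_apply, ← map_mul]; rfl
      rw [h1]
      have h2 : (ρ' m) ((ρ' (n * m)⁻¹) (q0 (π ((n * m : N) : G) v)))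
          = (ρ' m * ρ' (n * m)⁻¹) (q0 (π ((n * m : N) : G) v)) := rfl
      rw [h2, ← map_mul]
      congr 2
      group
    rw [Finset.sum_congr rfl (fun n _ => key n), ← map_sum]
    congr 1
    exact Fintype.sum_equiv (Equiv.mulRight m)
      (fun n => (ρ' (n * m)⁻¹) (q0 (π ((n * m : N) : G) v)))
      (fun n => (ρ' n⁻¹) (q0 (π (n : G) v))) (fun n => rfl)
  -- the sum of G-translates of range f is all of V
  set S : Submodule ℂ V := ⨆ g : G, (LinearMap.range f).map (π g) with hS
  have hSinv : ∀ g : G, ∀ v ∈ S, π g v ∈ S := by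
    intro g v hv
    have : Submodule.map (π g) S ≤ S := by
      rw [hS, Submodule.map_iSup]
      apply iSup_le
      intro h
      rw [← Submodule.map_comp]
      have hcomp : ((π g).comp (π h) : V →ₗ[ℂ] V) = π (g * h) := by
        rw [map_mul]; rfl
      rw [hcomp]
      exact le_iSup (fun g : G => (LinearMap.range f).map (π g)) (g * h)
    exact this ⟨v, hv, rfl⟩
  have hSne : S ≠ ⊥ := by
    intro hbot
    have hle : LinearMap.range f ≤ S := by
      intro v hv
      have h1 : π 1 v ∈ (LinearMap.range f).map (π 1) := ⟨v, hv, rfl⟩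
      have h2 := le_iSup (fun g : G => (LinearMap.range f).map (π g)) 1 h1
      simpa using h2
    rw [hbot, le_bot_iff, LinearMap.range_eq_bot] at hle
    exact hf0 hle
  have hStop : S = ⊤ := (hπ.2 S hSinv).resolve_left hSne
  -- p is nonzero somewhere on a translate of range f
  obtain ⟨w₁, hw₁⟩ := hρ'.1
  have hpne : p ≠ 0 := fun h0 => hw₁ (by rw [← hpf' w₁, h0]; rfl)
  have hTex : ∃ g : G, (p ∘ₗ (π g) ∘ₗ f) ≠ 0 := by
    by_contra hcon
    push_neg at hcon
    have hle : S ≤ LinearMap.ker p := by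
      apply iSup_le
      intro g
      rintro _ ⟨_, ⟨w, rfl⟩, rfl⟩
      have := congrFun (congrArg (fun (h : W →ₗ[ℂ] W') => h.toFun) (hcon g)) w
      simpa [LinearMap.mem_ker] using this
    rw [hStop, top_le_iff] at hle
    exact hpne (LinearMap.ker_eq_top.mp hle)
  obtain ⟨g, hT0⟩ := hTex
  set T : W →ₗ[ℂ] W' := p ∘ₗ (π g) ∘ₗ f with hTdef
  set σ : Representation ℂ N W := conjRep ρ g with hσdef
  -- T is equivariant from σ to ρ'
  have hmemc : ∀ n : N, g⁻¹ * (n : G) * g ∈ N := fun n => by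
    simpa using ‹N.Normal›.conj_mem _ n.2 g⁻¹
  have hTequi : ∀ (n : N) (w : W), T (σ n w) = ρ' n (T w) := by
    intro n w
    have h1 : σ n w = ρ ⟨g⁻¹ * (n : G) * g, hmemc n⟩ w := by
      rw [hσdef, conjRep_apply_mk ρ g n (hmemc n)]
    rw [hTdef]
    simp only [LinearMap.comp_apply]
    rw [h1, hfπ, ← Module.End.mul_apply, ← map_mul]
    show p (π (g * (g⁻¹ * ↑n * g)) (f w)) = _
    have h2 : g * (g⁻¹ * (n : G) * g) = ↑n * g := by group
    rw [h2, map_mul, Module.End.mul_apply, hpequi]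
  -- σ is irreducible
  have hσirr : IsIrreducibleRep σ := by
    refine ⟨hρ.1, fun U hU => hρ.2 U ?_⟩
    intro m v hv
    have hmem : g * (m : G) * g⁻¹ ∈ N := ‹N.Normal›.conj_mem _ m.2 g
    have := hU ⟨g * m * g⁻¹, hmem⟩ v hv
    have heq : σ ⟨g * (m : G) * g⁻¹, hmem⟩ = ρ m := by
      rw [hσdef]; exact conjRep_apply_mk' ρ g m hmem
    rwa [heq] at this
  -- Schur: T is an isomorphism
  have hkerT : LinearMap.ker T = ⊥ := by
    rcases hσirr.2 (LinearMap.ker T) (fun n w hw => by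
      simp only [LinearMap.mem_ker] at hw ⊢
      rw [hTequi n w, hw, map_zero]) with h | h
    · exact h
    · exact absurd (LinearMap.ker_eq_top.mp h) hT0
  have hrangeT : LinearMap.range T = ⊤ := by
    rcases hρ'.2 (LinearMap.range T) (fun n w hw => by
      obtain ⟨x, rfl⟩ := hw
      exact ⟨σ n x, hTequi n x⟩) with h | h
    · exact absurd (LinearMap.range_eq_bot.mp h) hT0
    · exact h
  set e : W ≃ₗ[ℂ] W' := LinearEquiv.ofBijective T
    ⟨LinearMap.ker_eq_bot.mp hkerT, LinearMap.range_eq_top.mp hrangeT⟩ with hedef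
  have heT : ∀ w : W, e w = T w := fun w => rfl
  have heequi : ∀ (n : N) (w : W), e (σ n w) = ρ' n (e w) := by
    intro n w; rw [heT, heT, hTequi]
  have heequi' : ∀ (n : N) (w' : W'), e.symm (ρ' n w') = σ n (e.symm w') := by
    intro n w'
    apply e.injective
    rw [e.apply_symm_apply, heequi, e.apply_symm_apply]
  -- π g as a linear equivalence
  set eg : V ≃ₗ[ℂ] V := LinearEquiv.ofLinear (π g) (π g⁻¹)
    (by show π g * π g⁻¹ = 1; rw [← map_mul]; simp)
    (by show π g⁻¹ * π g = 1; rw [← map_mul]; simp) with hegdef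
  -- step 1 : Hom(ρ, τ) ≃ Hom(σ, τ)
  have step1 : Module.finrank ℂ (equivariantHoms ρ τ) =
      Module.finrank ℂ (equivariantHoms σ τ) := by
    apply finrank_equivariantHoms_eq ρ σ τ τ
      (LinearEquiv.arrowCongr (LinearEquiv.refl ℂ W) eg)
    · intro h hh n w
      rw [mem_equivariantHoms] at hh
      have hhπ : ∀ (m : N) (w : W), h (ρ m w) = π (m : G) (h w) := hh
      have h1 : σ n w = ρ ⟨g⁻¹ * (n : G) * g, hmemc n⟩ w := by
        rw [hσdef, conjRep_apply_mk ρ g n (hmemc n)]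
      show (π g) (h (σ n w)) = π (n : G) ((π g) (h w))
      rw [h1, hhπ, ← Module.End.mul_apply, ← map_mul]
      show π (g * (g⁻¹ * ↑n * g)) (h w) = _
      have h2 : g * (g⁻¹ * (n : G) * g) = ↑n * g := by group
      rw [h2, map_mul]
      rfl
    · intro h hh n w
      rw [mem_equivariantHoms] at hh
      have hhπ : ∀ (m : N) (w : W), h (σ m w) = π (m : G) (h w) := hh
      have hmem : g * (n : G) * g⁻¹ ∈ N := ‹N.Normal›.conj_mem _ n.2 g
      have heq : σ ⟨g * (n : G) * g⁻¹, hmem⟩ = ρ n := by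
        rw [hσdef]; exact conjRep_apply_mk' ρ g n hmem
      show (π g⁻¹) (h (ρ n w)) = π (n : G) ((π g⁻¹) (h w))
      rw [← heq, hhπ ⟨g * (n : G) * g⁻¹, hmem⟩ w]
      show (π g⁻¹) (π (g * ↑n * g⁻¹) (h w)) = _
      rw [← Module.End.mul_apply, ← map_mul]
      have h2 : g⁻¹ * (g * (n : G) * g⁻¹) = ↑n * g⁻¹ := by group
      rw [h2, map_mul]
      rfl
  -- step 2 : Hom(σ, τ) ≃ Hom(ρ', τ)
  have step2 : Module.finrank ℂ (equivariantHoms σ τ) =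
      Module.finrank ℂ (equivariantHoms ρ' τ) := by
    apply finrank_equivariantHoms_eq σ ρ' τ τ
      (LinearEquiv.arrowCongr e (LinearEquiv.refl ℂ V))
    · intro h hh n w'
      rw [mem_equivariantHoms] at hh
      show h (e.symm (ρ' n w')) = τ n (h (e.symm w'))
      rw [heequi', hh]
    · intro h hh n w
      rw [mem_equivariantHoms] at hh
      show h (e (σ n w)) = τ n (h (e w))
      rw [heequi, hh]
  rw [step1, step2]


end RestrictionMult
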